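/- There exist sharp qubit observables that do not commute but whose two conditionings coincide: for the spin component observables S^m and S^n on ℂ² in directions m = (0,0,1) and n = (1,0,0) (i.e. S^m = {diag(1,0), diag(0,1)} and S^n = {(1/2)[[1,1],[1,1]], (1/2)[[1,−1],[−1,1]]}), one has (S^n | S^m) = {(1/2)I, (1/2)I} = (S^m | S^n), while S^m_+ S^n_+ ≠ S^n_+ S^m_+. -/

import Mathlib

open Matrix
open scoped Classical ComplexOrder

/-- The positive square root of a positive semidefinite matrix
(junk value `0` on non-positive-semidefinite matrices). -/
noncomputable def sqrtM {ι : Type*} [Fintype ι] [DecidableEq ι] (a : Matrix ι ι ℂ) :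
    Matrix ι ι ℂ :=
  if h : a.PosSemidef then
    (h.1.eigenvectorUnitary : Matrix ι ι ℂ) *
      diagonal (fun i => ((Real.sqrt (h.1.eigenvalues i) : ℝ) : ℂ)) *
      (star h.1.eigenvectorUnitary : Matrix ι ι ℂ)
  else 0

/-- The sequential product `a ∘ b = a^{1/2} b a^{1/2}` of effects. -/
noncomputable def seqProd {ι : Type*} [Fintype ι] [DecidableEq ι] (a b : Matrix ι ι ℂ) :
    Matrix ι ι ℂ :=
  sqrtM a * b * sqrtM a

/-- An effect: an operator `a` with `0 ≤ a ≤ I` in the Loewner order. -/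
def IsEffect {ι : Type*} [Fintype ι] [DecidableEq ι] (a : Matrix ι ι ℂ) : Prop :=
  a.PosSemidef ∧ (1 - a).PosSemidef

/-- The effect `S^m_+` for the direction `m = (0,0,1)`. -/
noncomputable def Smp : Matrix (Fin 2) (Fin 2) ℂ := !![1,0; 0,0]

/-- The effect `S^m_-` for the direction `m = (0,0,1)`. -/
noncomputable def Smm : Matrix (Fin 2) (Fin 2) ℂ := !![0,0; 0,1]

/-- The effect `S^n_+` for the direction `n = (1,0,0)`. -/
noncomputable def Snp : Matrix (Fin 2) (Fin 2) ℂ := (1/2 : ℂ) • !![1,1; 1,1]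

/-- The effect `S^n_-` for the direction `n = (1,0,0)`. -/
noncomputable def Snm : Matrix (Fin 2) (Fin 2) ℂ := (1/2 : ℂ) • !![1,-1; -1,1]

lemma sqrtM_proj {ι : Type*} [Fintype ι] [DecidableEq ι] {a : Matrix ι ι ℂ}
    (ha : a.IsHermitian) (h2 : a * a = a) : sqrtM a = a := by
  have hps : a.PosSemidef := by
    have := Matrix.posSemidef_conjTranspose_mul_self a
    rwa [ha.eq, h2] at this
  rw [sqrtM, dif_pos hps]
  have hA := hps.1
  have hDD : diagonal ((RCLike.ofReal ∘ hA.eigenvalues : ι → ℂ)) *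
      diagonal (RCLike.ofReal ∘ hA.eigenvalues) = diagonal (RCLike.ofReal ∘ hA.eigenvalues) := by
    rw [← hA.conjStarAlgAut_star_eigenvectorUnitary, ← map_mul, h2]
  rw [diagonal_mul_diagonal] at hDD
  have hsq : (fun i => ((Real.sqrt (hA.eigenvalues i) : ℝ) : ℂ)) =
      (RCLike.ofReal ∘ hA.eigenvalues : ι → ℂ) := by
    funext i
    have h1 := congrFun (diagonal_injective hDD) i
    simp only [Function.comp_apply] at h1
    have he : hA.eigenvalues i * hA.eigenvalues i = hA.eigenvalues i := by exact_mod_cast h1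
    have h' : hA.eigenvalues i * (hA.eigenvalues i - 1) = 0 := by linear_combination he
    rcases mul_eq_zero.mp h' with h0 | h0
    · simp [h0]
    · have : hA.eigenvalues i = 1 := by linarith
      simp [this]
  rw [hsq]
  conv_rhs => rw [hA.spectral_theorem]
  simp [Unitary.conjStarAlgAut_apply]

/-- For the spin component observables `S^m = {Smp, Smm}` and `S^n = {Snp, Snm}` in the
directions `m = (0,0,1)` and `n = (1,0,0)`: both conditionings `(S^n|S^m)` and
`(S^m|S^n)` consist of the effects `(1/2)I`, yet `S^m` and `S^n` do not commute. -/
theorem stmt_19 :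
    seqProd Smp Snp + seqProd Smm Snp = (1/2 : ℂ) • 1 ∧
    seqProd Smp Snm + seqProd Smm Snm = (1/2 : ℂ) • 1 ∧
    seqProd Snp Smp + seqProd Snm Smp = (1/2 : ℂ) • 1 ∧
    seqProd Snp Smm + seqProd Snm Smm = (1/2 : ℂ) • 1 ∧
    Smp * Snp ≠ Snp * Smp := by
  have herm : ∀ a : Matrix (Fin 2) (Fin 2) ℂ, (∀ i j, a i j = star (a j i)) → a.IsHermitian := by
    intro a h; ext i j; simp [Matrix.conjTranspose_apply, h i j]
  have hSmp : sqrtM Smp = Smp := sqrtM_proj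
    (herm _ (by intro i j; fin_cases i <;> fin_cases j <;> simp [Smp]))
    (by ext i j; fin_cases i <;> fin_cases j <;> simp [Smp, Matrix.mul_apply, Fin.sum_univ_two])
  have hSmm : sqrtM Smm = Smm := sqrtM_proj
    (herm _ (by intro i j; fin_cases i <;> fin_cases j <;> simp [Smm]))
    (by ext i j; fin_cases i <;> fin_cases j <;> simp [Smm, Matrix.mul_apply, Fin.sum_univ_two])
  have hSnp : sqrtM Snp = Snp := sqrtM_proj
    (herm _ (by intro i j; fin_cases i <;> fin_cases j <;> simp [Snp]))
    (by ext i j; fin_cases i <;> fin_cases j <;> simp [Snp, Matrix.mul_apply, Fin.sum_univ_two] <;> norm_num)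
  have hSnm : sqrtM Snm = Snm := sqrtM_proj
    (herm _ (by intro i j; fin_cases i <;> fin_cases j <;> simp [Snm]))
    (by ext i j; fin_cases i <;> fin_cases j <;> simp [Snm, Matrix.mul_apply, Fin.sum_univ_two] <;> norm_num)
  refine ⟨?_, ?_, ?_, ?_, ?_⟩
  · simp only [seqProd, hSmp, hSmm]
    ext i j; fin_cases i <;> fin_cases j <;>
      simp [Smp, Smm, Snp, Matrix.mul_apply, Fin.sum_univ_two, Matrix.one_apply] <;> norm_num
  · simp only [seqProd, hSmp, hSmm]
    ext i j; fin_cases i <;> fin_cases j <;>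
      simp [Smp, Smm, Snm, Matrix.mul_apply, Fin.sum_univ_two, Matrix.one_apply] <;> norm_num
  · simp only [seqProd, hSnp, hSnm]
    ext i j; fin_cases i <;> fin_cases j <;>
      simp [Smp, Snp, Snm, Matrix.mul_apply, Fin.sum_univ_two, Matrix.one_apply] <;> norm_num
  · simp only [seqProd, hSnp, hSnm]
    ext i j; fin_cases i <;> fin_cases j <;>
      simp [Smm, Snp, Snm, Matrix.mul_apply, Fin.sum_univ_two, Matrix.one_apply] <;> norm_num
  · intro h
    have h10 := congrArg (fun M : Matrix (Fin 2) (Fin 2) ℂ => M 1 0) h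
    simp [Smp, Snp, Matrix.mul_apply, Fin.sum_univ_two] at h10
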